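/- For every x ∈ (0,∞) and all t, t' ∈ (0,∞): ∫_0^∞ Ψ^x(t,y) Ψ^x(t',y) dy = 2x ( 1 − Φ( (a/2) (t + t')^{1/2} ) ). -/

import Mathlib

open MeasureTheory Real Set

/-- Gaussian heat kernel `p_t(z) = (2πt)^{-1/2} exp(-z²/(2t))`. -/
noncomputable def heatK (t z : ℝ) : ℝ :=
  (Real.sqrt (2 * Real.pi * t))⁻¹ * Real.exp (-(z ^ 2) / (2 * t))

/-- `q_t(x,y) = (1/(ax)) p_t(log x /a - log y /a + at/2)`. -/
noncomputable def qker (a t x y : ℝ) : ℝ :=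
  (a * x)⁻¹ * heatK t (Real.log x / a - Real.log y / a + a * t / 2)

/-- `q̂_t(x,y) = (1/(ax)) p_t(log x /a - log y /a - at/2)`. -/
noncomputable def qhat (a t x y : ℝ) : ℝ :=
  (a * x)⁻¹ * heatK t (Real.log x / a - Real.log y / a - a * t / 2)

/-- `θ(x,y,t) = log x /a - log y /a - at/2`. -/
noncomputable def theta (a x y t : ℝ) : ℝ :=
  Real.log x / a - Real.log y / a - a * t / 2

/-- `Ψ^x(t,y) = ∫_0^x q̂_t(z,y) dz`. -/
noncomputable def Psi (a x t y : ℝ) : ℝ := ∫ z in Set.Ioc (0:ℝ) x, qhat a t z y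

/-- standard normal cdf `Φ(ξ) = ∫_{-∞}^ξ p_1(z) dz`. -/
noncomputable def Phi (ξ : ℝ) : ℝ := ∫ z in Set.Iic ξ, heatK 1 z

open Filter

lemma heatK_nonneg (t z : ℝ) : 0 ≤ heatK t z := by
  unfold heatK; positivity

lemma continuous_heatK (t : ℝ) : Continuous (heatK t) := by
  unfold heatK
  exact continuous_const.mul (Real.continuous_exp.comp (by continuity))

lemma integrable_heatK {t : ℝ} (ht : 0 < t) : Integrable (heatK t) := by
  have h : (fun z => Real.exp (-(1/(2*t)) * z ^ 2)) = fun z => Real.exp (-(z^2) / (2*t)) := by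
    ext z; ring_nf
  have := (integrable_exp_neg_mul_sq (b := 1/(2*t)) (by positivity)).const_mul
    (Real.sqrt (2 * Real.pi * t))⁻¹
  unfold heatK
  convert this using 2 with z
  congr 1; ring_nf

lemma integral_heatK {t : ℝ} (ht : 0 < t) : ∫ z, heatK t z = 1 := by
  unfold heatK
  rw [integral_const_mul]
  have h : (fun z : ℝ => Real.exp (-(z^2) / (2*t))) = fun z => Real.exp (-(1/(2*t)) * z ^ 2) := by
    ext z; ring_nf
  rw [h, integral_gaussian]
  rw [show Real.pi / (1/(2*t)) = 2 * Real.pi * t by field_simp]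
  rw [inv_mul_cancel₀]
  positivity

lemma integral_heatK_sub {t : ℝ} (ht : 0 < t) (c : ℝ) : ∫ z, heatK t (z - c) = 1 := by
  rw [integral_sub_right_eq_self (fun z => heatK t z) c]; exact integral_heatK ht

lemma image_const_mul_Iic' {c : ℝ} (hc : 0 < c) (b : ℝ) :
    (fun u => c * u) '' Iic b = Iic (c * b) := by
  ext z
  simp only [mem_image, mem_Iic]
  constructor
  · rintro ⟨u, hu, rfl⟩; exact mul_le_mul_of_nonneg_left hu hc.le
  · intro hz; exact ⟨z / c, by rwa [div_le_iff₀' hc] , by field_simp⟩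

lemma heatK_scale {t : ℝ} (ht : 0 < t) (z : ℝ) :
    heatK t z = (Real.sqrt t)⁻¹ * heatK 1 (z / Real.sqrt t) := by
  unfold heatK
  have h1 : Real.sqrt (2 * Real.pi * t) = Real.sqrt (2 * Real.pi * 1) * Real.sqrt t := by
    rw [← Real.sqrt_mul (by positivity)]; ring_nf
  have h2 : (z / Real.sqrt t) ^ 2 = z ^ 2 / t := by
    rw [div_pow, Real.sq_sqrt ht.le]
  rw [h1, h2, mul_inv]
  rw [show -(z^2/t) / (2*1) = -(z^2)/(2*t) by field_simp]
  ring

lemma setIntegral_Iic_heatK {t : ℝ} (ht : 0 < t) (c : ℝ) :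
    ∫ z in Iic c, heatK t z = Phi (c / Real.sqrt t) := by
  have hst : (0:ℝ) < Real.sqrt t := Real.sqrt_pos.2 ht
  have himg : (fun u => Real.sqrt t * u) '' Iic (c / Real.sqrt t) = Iic c := by
    rw [image_const_mul_Iic' hst]; congr 1; field_simp
  rw [← himg, integral_image_eq_integral_abs_deriv_smul measurableSet_Iic
    (fun u _ => (by simpa using ((hasDerivAt_id u).const_mul (Real.sqrt t)).hasDerivWithinAt :
      HasDerivWithinAt (fun u => Real.sqrt t * u) (Real.sqrt t) (Iic (c / Real.sqrt t)) u))
    (fun u hu v hv h => by simpa [hst.ne'] using h) (heatK t)]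
  unfold Phi
  apply setIntegral_congr_fun measurableSet_Iic
  intro u _
  simp only [smul_eq_mul, mul_one]
  rw [abs_of_pos hst, heatK_scale ht]
  rw [mul_div_cancel_left₀ _ hst.ne']
  rw [← mul_assoc, mul_inv_cancel₀ hst.ne', one_mul]

lemma Phi_nonneg (ξ : ℝ) : 0 ≤ Phi ξ :=
  setIntegral_nonneg measurableSet_Iic (fun z _ => heatK_nonneg 1 z)

lemma Phi_le_one (ξ : ℝ) : Phi ξ ≤ 1 := by
  rw [← integral_heatK one_pos]
  exact setIntegral_le_integral (integrable_heatK one_pos)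
    (Filter.Eventually.of_forall (fun z => heatK_nonneg 1 z))

lemma setIntegral_Iic_heatK_le_one {t : ℝ} (ht : 0 < t) (c : ℝ) :
    ∫ z in Iic c, heatK t z ≤ 1 := by
  rw [setIntegral_Iic_heatK ht]; exact Phi_le_one _

lemma hasDerivAt_Phi (ξ : ℝ) : HasDerivAt Phi (heatK 1 ξ) ξ := by
  have key : ∀ b : ℝ, Phi b = Phi 0 + ∫ z in (0:ℝ)..b, heatK 1 z := by
    intro b
    unfold Phi
    rw [← intervalIntegral.integral_Iic_sub_Iic ((integrable_heatK one_pos).integrableOn)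
      ((integrable_heatK one_pos).integrableOn)]
    ring
  have h2 : HasDerivAt (fun b => Phi 0 + ∫ z in (0:ℝ)..b, heatK 1 z) (heatK 1 ξ) ξ := by
    apply HasDerivAt.const_add
    exact intervalIntegral.integral_hasDerivAt_right
      ((integrable_heatK one_pos).intervalIntegrable)
      ((continuous_heatK 1).stronglyMeasurableAtFilter _ _)
      (continuous_heatK 1).continuousAt
  exact (funext key ▸ h2 : HasDerivAt Phi (heatK 1 ξ) ξ)

lemma continuous_Phi : Continuous Phi := by
  have : Differentiable ℝ Phi := fun ξ => (hasDerivAt_Phi ξ).differentiableAt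
  exact this.continuous

lemma heatK_tilt {t : ℝ} (ht : 0 < t) (b z : ℝ) :
    Real.exp (b * z) * heatK t z = Real.exp (b ^ 2 * t / 2) * heatK t (z - b * t) := by
  unfold heatK
  rw [show Real.exp (b*z) * ((Real.sqrt (2*Real.pi*t))⁻¹ * Real.exp (-(z^2)/(2*t)))
      = (Real.sqrt (2*Real.pi*t))⁻¹ * (Real.exp (b*z) * Real.exp (-(z^2)/(2*t))) by ring,
    show Real.exp (b^2*t/2) * ((Real.sqrt (2*Real.pi*t))⁻¹ * Real.exp (-((z-b*t)^2)/(2*t)))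
      = (Real.sqrt (2*Real.pi*t))⁻¹ * (Real.exp (b^2*t/2) * Real.exp (-((z-b*t)^2)/(2*t))) by ring,
    ← Real.exp_add, ← Real.exp_add]
  congr 1
  field_simp
  ring

lemma setIntegral_Iic_heatK_sub {t : ℝ} (ht : 0 < t) (d m : ℝ) :
    ∫ s in Iic d, heatK t (s - m) = Phi ((d - m) / Real.sqrt t) := by
  have himg : (fun u : ℝ => u + m) '' Iic (d - m) = Iic d := by
    rw [Set.image_add_const_Iic]; congr 1; ring
  rw [← himg, integral_image_eq_integral_abs_deriv_smul measurableSet_Iic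
    (fun u _ => (by simpa using ((hasDerivAt_id u).add_const m).hasDerivWithinAt :
      HasDerivWithinAt (fun u : ℝ => u + m) 1 (Iic (d - m)) u))
    (fun u hu v hv h => by simpa using h) (fun s => heatK t (s - m))]
  simp only [abs_one, one_smul, add_sub_cancel_right]
  exact setIntegral_Iic_heatK ht (d - m)

lemma integral_Iic_add_Ioi_heatK {t : ℝ} (ht : 0 < t) (ξ : ℝ) :
    (∫ z in Iic ξ, heatK t z) + (∫ z in Ioi ξ, heatK t z) = 1 := by
  rw [← integral_heatK ht (t := t)]
  rw [← setIntegral_union (Iic_disjoint_Ioi le_rfl) measurableSet_Ioi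
    ((integrable_heatK ht).integrableOn) ((integrable_heatK ht).integrableOn),
    Iic_union_Ioi, setIntegral_univ]

lemma Phi_neg (ξ : ℝ) : Phi (-ξ) = 1 - Phi ξ := by
  have heven : ∫ z in Iic (-ξ), heatK 1 z = ∫ z in Ioi ξ, heatK 1 z := by
    have himg : (fun u : ℝ => -u) '' Ioi ξ = Iio (-ξ) := by
      ext z; simp only [mem_image, mem_Ioi, mem_Iio]
      constructor
      · rintro ⟨u, hu, rfl⟩; linarith
      · intro hz; exact ⟨-z, by linarith, by ring⟩
    have h2 : ∫ z in Iio (-ξ), heatK 1 z = ∫ z in Ioi ξ, heatK 1 z := by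
      rw [← himg, integral_image_eq_integral_abs_deriv_smul measurableSet_Ioi
        (fun u _ => (hasDerivAt_neg u).hasDerivWithinAt)
        (fun u hu v hv h => by simpa using h) (heatK 1)]
      apply setIntegral_congr_fun measurableSet_Ioi
      intro u _
      simp only [smul_eq_mul, abs_neg, abs_one, one_mul]
      unfold heatK; rw [show (-u)^2 = u^2 by ring]
    rw [← h2, integral_Iic_eq_integral_Iio]
  unfold Phi
  rw [heven, eq_sub_iff_add_eq, add_comm]
  exact integral_Iic_add_Ioi_heatK one_pos ξ

lemma Phi_le_exp {l : ℝ} (hl : 0 ≤ l) (ξ : ℝ) :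
    Phi ξ ≤ Real.exp (l * ξ + l ^ 2 / 2) := by
  have hptw : ∀ z : ℝ, Real.exp (l * (ξ - z)) * heatK 1 z
      = Real.exp (l * ξ + l ^ 2 / 2) * heatK 1 (z + l) := by
    intro z
    have h := heatK_tilt one_pos (-l) z
    rw [show (-l) * z = -(l*z) by ring, show (-l)^2*1/2 = l^2/2 by ring,
      show z - (-l) * 1 = z + l by ring] at h
    rw [show l * (ξ - z) = l * ξ + -(l * z) by ring, Real.exp_add, mul_assoc, h,
      Real.exp_add (l*ξ) (l^2/2)]
    ring
  have hInt : Integrable (fun z => Real.exp (l * (ξ - z)) * heatK 1 z) := by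
    rw [show (fun z => Real.exp (l * (ξ - z)) * heatK 1 z)
      = fun z => Real.exp (l * ξ + l ^ 2 / 2) * heatK 1 (z + l) from funext hptw]
    exact ((integrable_heatK one_pos).comp_add_right l).const_mul _
  have step1 : Phi ξ ≤ ∫ z in Iic ξ, Real.exp (l * (ξ - z)) * heatK 1 z := by
    unfold Phi
    apply setIntegral_mono_on ((integrable_heatK one_pos).integrableOn)
      hInt.integrableOn measurableSet_Iic
    intro z hz
    nth_rewrite 1 [← one_mul (heatK 1 z)]
    apply mul_le_mul_of_nonneg_right _ (heatK_nonneg 1 z)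
    rw [← Real.exp_zero]
    exact Real.exp_le_exp.2 (by nlinarith [mem_Iic.1 hz])
  have step2 : (∫ z in Iic ξ, Real.exp (l * (ξ - z)) * heatK 1 z)
      ≤ ∫ z, Real.exp (l * (ξ - z)) * heatK 1 z :=
    setIntegral_le_integral hInt (Filter.Eventually.of_forall (fun z => mul_nonneg (Real.exp_nonneg _) (heatK_nonneg 1 z)))
  have step3 : (∫ z, Real.exp (l * (ξ - z)) * heatK 1 z) = Real.exp (l * ξ + l ^ 2 / 2) := by
    rw [show (fun z => Real.exp (l * (ξ - z)) * heatK 1 z)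
      = fun z => Real.exp (l * ξ + l ^ 2 / 2) * heatK 1 (z + l) from funext hptw]
    rw [integral_const_mul, integral_add_right_eq_self (fun z => heatK 1 z) l,
      integral_heatK one_pos, mul_one]
  linarith

lemma heatK_conv_ptwise {t t' : ℝ} (ht : 0 < t) (ht' : 0 < t') (c s m : ℝ) :
    heatK t (m - c) * heatK t' (s - m)
      = heatK (t + t') (s - c)
        * heatK (t * t' / (t + t')) (m - (t' * c + t * s) / (t + t')) := by
  have hT : (0:ℝ) < t + t' := by linarith
  unfold heatK
  have hconst : Real.sqrt (2 * Real.pi * t) * Real.sqrt (2 * Real.pi * t')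
      = Real.sqrt (2 * Real.pi * (t + t')) * Real.sqrt (2 * Real.pi * (t * t' / (t + t'))) := by
    rw [← Real.sqrt_mul (by positivity), ← Real.sqrt_mul (by positivity)]
    congr 1
    field_simp
  have hexp : Real.exp (-((m - c) ^ 2) / (2 * t)) * Real.exp (-((s - m) ^ 2) / (2 * t'))
      = Real.exp (-((s - c) ^ 2) / (2 * (t + t')))
        * Real.exp (-((m - (t' * c + t * s) / (t + t')) ^ 2) / (2 * (t * t' / (t + t')))) := by
    rw [← Real.exp_add, ← Real.exp_add]
    congr 1
    field_simp
    ring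
  rw [show (√(2*Real.pi*t))⁻¹ * Real.exp (-((m-c)^2)/(2*t))
      * ((√(2*Real.pi*t'))⁻¹ * Real.exp (-((s-m)^2)/(2*t')))
      = (√(2*Real.pi*t) * √(2*Real.pi*t'))⁻¹
      * (Real.exp (-((m-c)^2)/(2*t)) * Real.exp (-((s-m)^2)/(2*t'))) by
        rw [mul_inv]; ring]
  rw [hconst, hexp, mul_inv]
  ring

lemma heatK_conv {t t' : ℝ} (ht : 0 < t) (ht' : 0 < t') (c s : ℝ) :
    ∫ m, heatK t (m - c) * heatK t' (s - m) = heatK (t + t') (s - c) := by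
  have hσ : (0:ℝ) < t * t' / (t + t') := by positivity
  rw [show (fun m => heatK t (m - c) * heatK t' (s - m))
      = fun m => heatK (t + t') (s - c)
        * heatK (t * t' / (t + t')) (m - (t' * c + t * s) / (t + t'))
      from funext (fun m => heatK_conv_ptwise ht ht' c s m)]
  rw [integral_const_mul, integral_heatK_sub hσ, mul_one]

lemma heatK_fubini {t t' : ℝ} (ht : 0 < t) (ht' : 0 < t') (c d : ℝ) :
    ∫ m, heatK t (m - c) * ∫ s in Iic d, heatK t' (s - m)
      = Phi ((d - c) / Real.sqrt (t + t')) := by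
  set f : ℝ → ℝ → ℝ := fun m s => heatK t (m - c) * heatK t' (s - m) with hf
  have hg : Integrable (fun p : ℝ × ℝ => heatK t (p.1 - c) * heatK t' p.2)
      ((volume : Measure ℝ).prod (volume : Measure ℝ)) :=
    Integrable.mul_prod ((integrable_heatK ht).comp_sub_right c) (integrable_heatK ht')
  have hshear : MeasurePreserving (fun p : ℝ × ℝ => (p.1, p.2 - p.1))
      ((volume : Measure ℝ).prod (volume : Measure ℝ))
      ((volume : Measure ℝ).prod (volume : Measure ℝ)) :=
    measurePreserving_prod_sub (volume : Measure ℝ) (volume : Measure ℝ)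
  have huncurry : Integrable (Function.uncurry f)
      ((volume : Measure ℝ).prod (volume : Measure ℝ)) := by
    have := (hshear.integrable_comp hg.aestronglyMeasurable).2 hg
    convert this using 1
    rfl
  have huncurry' : Integrable (Function.uncurry f)
      ((volume : Measure ℝ).prod ((volume : Measure ℝ).restrict (Iic d))) := by
    have hrp : (volume : Measure ℝ).prod ((volume : Measure ℝ).restrict (Iic d))
        = ((volume : Measure ℝ).prod (volume : Measure ℝ)).restrict (univ ×ˢ Iic d) := by
      rw [← Measure.prod_restrict, Measure.restrict_univ]
    rw [hrp]
    exact huncurry.restrict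
  have hswap := integral_integral_swap huncurry'
  calc ∫ m, heatK t (m - c) * ∫ s in Iic d, heatK t' (s - m)
      = ∫ m, ∫ s in Iic d, f m s := by
        congr 1; ext m; rw [← integral_const_mul]
    _ = ∫ s in Iic d, ∫ m, f m s := hswap
    _ = ∫ s in Iic d, heatK (t + t') (s - c) := by
        apply setIntegral_congr_fun measurableSet_Iic
        intro s _
        exact heatK_conv ht ht' c s
    _ = Phi ((d - c) / Real.sqrt (t + t')) := setIntegral_Iic_heatK_sub (by linarith) d c

lemma image_exp_Iic {a : ℝ} (ha : 0 < a) (L : ℝ) :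
    (fun u => Real.exp (a * u)) '' Iic L = Ioc 0 (Real.exp (a * L)) := by
  ext z
  simp only [mem_image, mem_Iic, mem_Ioc]
  constructor
  · rintro ⟨u, hu, rfl⟩
    exact ⟨Real.exp_pos _, Real.exp_le_exp.2 (by nlinarith)⟩
  · rintro ⟨hz0, hzx⟩
    refine ⟨Real.log z / a, ?_, ?_⟩
    · rw [div_le_iff₀ ha, mul_comm]
      calc Real.log z ≤ Real.log (Real.exp (a * L)) :=
        Real.log_le_log hz0 hzx
      _ = a * L := Real.log_exp _
    · rw [mul_div_cancel₀ _ ha.ne', Real.exp_log hz0]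

lemma hasDerivWithinAt_exp_mul {a : ℝ} (u : ℝ) (s : Set ℝ) :
    HasDerivWithinAt (fun u => Real.exp (a * u)) (a * Real.exp (a * u)) s u := by
  have h := ((Real.hasDerivAt_exp (a * u)).comp u ((hasDerivAt_id u).const_mul a))
  simpa [mul_comm, Function.comp_def] using h.hasDerivWithinAt

lemma injOn_exp_mul {a : ℝ} (ha : 0 < a) (s : Set ℝ) :
    Set.InjOn (fun u => Real.exp (a * u)) s := by
  intro u _ v _ h
  have := Real.exp_injective h
  exact mul_left_cancel₀ ha.ne' this

lemma Psi_eq_Phi {a : ℝ} (ha : 0 < a) {x t : ℝ} (hx : 0 < x) (ht : 0 < t) (y : ℝ) :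
    Psi a x t y
      = Phi ((Real.log x / a - Real.log y / a - a * t / 2) / Real.sqrt t) := by
  set L := Real.log x / a with hL
  have hxL : Real.exp (a * L) = x := by
    rw [hL, mul_div_cancel₀ _ ha.ne', Real.exp_log hx]
  have himg : (fun u => Real.exp (a * u)) '' Iic L = Ioc 0 x := by
    rw [image_exp_Iic ha, hxL]
  unfold Psi
  rw [← himg, integral_image_eq_integral_abs_deriv_smul measurableSet_Iic
    (fun u _ => hasDerivWithinAt_exp_mul u _) (injOn_exp_mul ha _) (fun z => qhat a t z y)]
  have hptw : ∀ u : ℝ, |a * Real.exp (a * u)| • qhat a t (Real.exp (a * u)) y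
      = heatK t (u - (Real.log y / a + a * t / 2)) := by
    intro u
    have he : (0:ℝ) < a * Real.exp (a * u) := by positivity
    rw [abs_of_pos he, smul_eq_mul]
    unfold qhat
    rw [Real.log_exp, mul_div_cancel_left₀ _ ha.ne', ← mul_assoc, mul_inv_cancel₀ he.ne',
      one_mul]
    ring_nf
  rw [show (fun u => |a * Real.exp (a * u)| • qhat a t (Real.exp (a * u)) y)
      = fun u => heatK t (u - (Real.log y / a + a * t / 2)) from funext hptw]
  rw [setIntegral_Iic_heatK_sub ht]
  congr 1
  ring

lemma heatK_neg (t z : ℝ) : heatK t (-z) = heatK t z := by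
  unfold heatK; rw [neg_pow]; norm_num

lemma hasDerivAt_Phi_aff {t : ℝ} (ht : 0 < t) (c m : ℝ) :
    HasDerivAt (fun m => Phi ((-m - c) / Real.sqrt t)) (-(heatK t (m + c))) m := by
  have hst : (0:ℝ) < Real.sqrt t := Real.sqrt_pos.2 ht
  have hin : HasDerivAt (fun m : ℝ => (-m - c) / Real.sqrt t) (-(Real.sqrt t)⁻¹) m := by
    have : HasDerivAt (fun m : ℝ => -m - c) (-1) m := ((hasDerivAt_id m).neg).sub_const c
    simpa [neg_div, one_div] using this.div_const (Real.sqrt t)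
  have := (hasDerivAt_Phi ((-m - c) / Real.sqrt t)).comp m hin
  refine this.congr_deriv ?_
  rw [show (-m - c) / Real.sqrt t = -((m + c) / Real.sqrt t) by ring, heatK_neg]
  rw [heatK_scale ht (m + c)]
  ring

lemma exp_mul_heatK (a : ℝ) {t : ℝ} (ht : 0 < t) (m : ℝ) :
    Real.exp (a * m) * heatK t (m + a * t / 2) = heatK t (m - a * t / 2) := by
  have h := heatK_tilt ht a (m + a * t / 2)
  rw [show a * (m + a * t / 2) = a * m + a ^ 2 * t / 2 by ring, Real.exp_add] at h
  rw [show m + a * t / 2 - a * t = m - a * t / 2 by ring] at h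
  have hepos := Real.exp_pos (a ^ 2 * t / 2)
  calc Real.exp (a * m) * heatK t (m + a * t / 2)
      = (Real.exp (a * m) * Real.exp (a ^ 2 * t / 2) * heatK t (m + a * t / 2))
        / Real.exp (a ^ 2 * t / 2) := by
          rw [mul_comm (Real.exp (a * m)) (Real.exp (a ^ 2 * t / 2)), mul_assoc,
            mul_div_assoc, mul_comm (Real.exp (a ^ 2 * t / 2)),
            mul_div_assoc, div_self hepos.ne', mul_one]
    _ = heatK t (m - a * t / 2) := by rw [h]; field_simp

set_option maxHeartbeats 2000000 in
lemma I0_lemma {a t t' : ℝ} (ha : 0 < a) (ht : 0 < t) (ht' : 0 < t') :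
    ∫ m, a * Real.exp (a * m)
        * (Phi ((-m - a * t / 2) / Real.sqrt t) * Phi ((-m - a * t' / 2) / Real.sqrt t'))
      = 2 * (1 - Phi (a / 2 * Real.sqrt (t + t'))) := by
  have hT : (0:ℝ) < t + t' := by linarith
  set F₁ : ℝ → ℝ := fun m => Phi ((-m - a * t / 2) / Real.sqrt t) with hF₁def
  set F₂ : ℝ → ℝ := fun m => Phi ((-m - a * t' / 2) / Real.sqrt t') with hF₂def
  have hF₁cont : Continuous F₁ :=
    continuous_Phi.comp ((continuous_id.neg.sub continuous_const).div_const _)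
  have hF₂cont : Continuous F₂ :=
    continuous_Phi.comp ((continuous_id.neg.sub continuous_const).div_const _)
  have hF₁01 : ∀ m, 0 ≤ F₁ m ∧ F₁ m ≤ 1 := fun m => ⟨Phi_nonneg _, Phi_le_one _⟩
  have hF₂01 : ∀ m, 0 ≤ F₂ m ∧ F₂ m ≤ 1 := fun m => ⟨Phi_nonneg _, Phi_le_one _⟩
  -- Chernoff bound on F₁
  have hF₁bound : ∀ m, F₁ m ≤ Real.exp (a ^ 2 * t - 2 * a * m) := by
    intro m
    have hst : (0:ℝ) < Real.sqrt t := Real.sqrt_pos.2 ht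
    have h := Phi_le_exp (l := 2 * a * Real.sqrt t) (by positivity) ((-m - a * t / 2) / Real.sqrt t)
    have harg : 2 * a * Real.sqrt t * ((-m - a * t / 2) / Real.sqrt t)
        + (2 * a * Real.sqrt t) ^ 2 / 2 = a ^ 2 * t - 2 * a * m := by
      have hTT : Real.sqrt t * Real.sqrt t = t := Real.mul_self_sqrt ht.le
      field_simp
      nlinarith [hTT]
    rwa [harg] at h
  -- the function and its derivative
  set g : ℝ → ℝ := fun m => Real.exp (a * m) * F₁ m * F₂ m with hgdef
  set h : ℝ → ℝ := fun m => heatK t (m - a * t / 2) * F₂ m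
      + F₁ m * heatK t' (m - a * t' / 2) with hhdef
  set D : ℝ → ℝ := fun m => a * Real.exp (a * m) * (F₁ m * F₂ m) - h m with hDdef
  have hderiv : ∀ m, HasDerivAt g (D m) m := by
    intro m
    have hexp : HasDerivAt (fun m => Real.exp (a * m)) (a * Real.exp (a * m)) m := by
      have := (Real.hasDerivAt_exp (a * m)).comp m ((hasDerivAt_id m).const_mul a)
      simpa [mul_comm, Function.comp_def] using this
    have hd1 : HasDerivAt F₁ (-(heatK t (m + a * t / 2))) m := hasDerivAt_Phi_aff ht _ m
    have hd2 : HasDerivAt F₂ (-(heatK t' (m + a * t' / 2))) m := hasDerivAt_Phi_aff ht' _ m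
    have := (hexp.mul hd1).mul hd2
    refine this.congr_deriv ?_
    symm
    have e1 : Real.exp (a * m) * heatK t (m + a * t / 2) = heatK t (m - a * t / 2) :=
      exp_mul_heatK a ht m
    have e2 : Real.exp (a * m) * heatK t' (m + a * t' / 2) = heatK t' (m - a * t' / 2) :=
      exp_mul_heatK a ht' m
    rw [hDdef, hhdef]
    simp only [Pi.mul_apply]
    linear_combination F₂ m * e1 + F₁ m * e2
  -- integrability of h
  have hInt1 : Integrable (fun m => heatK t (m - a * t / 2) * F₂ m) := by
    have hc : Continuous (fun m => heatK t (m - a * t / 2) * F₂ m) :=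
      (((continuous_heatK t).comp (continuous_id.sub continuous_const))).mul hF₂cont
    apply Integrable.mono ((integrable_heatK ht).comp_sub_right (a * t / 2))
      hc.aestronglyMeasurable
    apply Filter.Eventually.of_forall
    intro m
    rw [Real.norm_eq_abs, Real.norm_eq_abs,
      abs_of_nonneg (mul_nonneg (heatK_nonneg _ _) (hF₂01 m).1),
      abs_of_nonneg (heatK_nonneg _ _)]
    nth_rewrite 2 [← mul_one (heatK t (m - a * t / 2))]
    exact mul_le_mul_of_nonneg_left (hF₂01 m).2 (heatK_nonneg _ _)
  have hInt2 : Integrable (fun m => F₁ m * heatK t' (m - a * t' / 2)) := by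
    have hc : Continuous (fun m => F₁ m * heatK t' (m - a * t' / 2)) :=
      hF₁cont.mul (((continuous_heatK t').comp (continuous_id.sub continuous_const)))
    apply Integrable.mono ((integrable_heatK ht').comp_sub_right (a * t' / 2))
      hc.aestronglyMeasurable
    apply Filter.Eventually.of_forall
    intro m
    rw [Real.norm_eq_abs, Real.norm_eq_abs,
      abs_of_nonneg (mul_nonneg (hF₁01 m).1 (heatK_nonneg _ _)),
      abs_of_nonneg (heatK_nonneg _ _)]
    nth_rewrite 2 [← one_mul (heatK t' (m - a * t' / 2))]
    exact mul_le_mul_of_nonneg_right (hF₁01 m).2 (heatK_nonneg _ _)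
  have hInth : Integrable h := hInt1.add hInt2
  -- integrability of φ
  have hφcont : Continuous (fun m => a * Real.exp (a * m) * (F₁ m * F₂ m)) := by
    apply Continuous.mul _ (hF₁cont.mul hF₂cont)
    exact continuous_const.mul (Real.continuous_exp.comp (continuous_const.mul continuous_id))
  have hφnonneg : ∀ m, 0 ≤ a * Real.exp (a * m) * (F₁ m * F₂ m) := fun m =>
    mul_nonneg (by positivity) (mul_nonneg (hF₁01 m).1 (hF₂01 m).1)
  have hIntφ : Integrable (fun m => a * Real.exp (a * m) * (F₁ m * F₂ m)) := by
    rw [← integrableOn_univ, ← Set.Iic_union_Ioi (a := (0:ℝ))]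
    apply IntegrableOn.union
    · -- on Iic 0
      have hexpint : IntegrableOn (fun m => a * Real.exp (a * m)) (Iic (0:ℝ)) := by
        have himg : (fun u : ℝ => a * u) '' Iic 0 = Iic 0 := by
          rw [image_const_mul_Iic' ha]; norm_num
        have hiff := integrableOn_image_iff_integrableOn_abs_deriv_smul measurableSet_Iic
          (fun u (_ : u ∈ Iic (0:ℝ)) => (by simpa using ((hasDerivAt_id u).const_mul a).hasDerivWithinAt :
            HasDerivWithinAt (fun u : ℝ => a * u) a (Iic (0:ℝ)) u))
          (fun u _ v _ huv => by simpa [ha.ne'] using huv) Real.exp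
        rw [himg] at hiff
        have := hiff.1 (integrableOn_exp_Iic 0)
        simpa [abs_of_pos ha, smul_eq_mul] using this
      apply Integrable.mono hexpint hφcont.aestronglyMeasurable.restrict
      apply ae_restrict_of_ae (Filter.Eventually.of_forall _)
      intro m
      rw [Real.norm_eq_abs, Real.norm_eq_abs, abs_of_nonneg (hφnonneg m),
        abs_of_nonneg (by positivity : (0:ℝ) ≤ a * Real.exp (a * m))]
      nth_rewrite 2 [← mul_one (a * Real.exp (a * m))]
      exact mul_le_mul_of_nonneg_left
        (mul_le_one₀ (hF₁01 m).2 (hF₂01 m).1 (hF₂01 m).2) (by positivity)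
    · -- on Ioi 0
      have hexpint : IntegrableOn (fun m => a * Real.exp (a ^ 2 * t) * Real.exp (-a * m))
          (Ioi (0:ℝ)) := (exp_neg_integrableOn_Ioi 0 ha).const_mul _
      apply Integrable.mono hexpint hφcont.aestronglyMeasurable.restrict
      apply ae_restrict_of_ae (Filter.Eventually.of_forall _)
      intro m
      rw [Real.norm_eq_abs, Real.norm_eq_abs, abs_of_nonneg (hφnonneg m),
        abs_of_nonneg (by positivity : (0:ℝ) ≤ a * Real.exp (a ^ 2 * t) * Real.exp (-a * m))]
      calc a * Real.exp (a * m) * (F₁ m * F₂ m)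
          ≤ a * Real.exp (a * m) * (Real.exp (a ^ 2 * t - 2 * a * m) * 1) := by
            apply mul_le_mul_of_nonneg_left _ (by positivity)
            exact mul_le_mul (hF₁bound m) (hF₂01 m).2 (hF₂01 m).1 (Real.exp_nonneg _)
        _ = a * Real.exp (a ^ 2 * t) * Real.exp (-a * m) := by
            simp only [mul_one, mul_assoc, ← Real.exp_add]
            congr 2
            ring
  have hIntD : Integrable D := hIntφ.sub hInth
  -- limits at ±∞
  have hgnonneg : ∀ m, 0 ≤ g m := fun m =>
    mul_nonneg (mul_nonneg (Real.exp_nonneg _) (hF₁01 m).1) (hF₂01 m).1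
  have hbot : Filter.Tendsto g Filter.atBot (nhds 0) := by
    have hb : ∀ m, g m ≤ Real.exp (a * m) := by
      intro m
      calc g m ≤ Real.exp (a * m) * 1 * 1 := by
            apply mul_le_mul (mul_le_mul le_rfl (hF₁01 m).2 (hF₁01 m).1 (Real.exp_nonneg _))
              (hF₂01 m).2 (hF₂01 m).1
            exact mul_nonneg (Real.exp_nonneg _) zero_le_one
        _ = Real.exp (a * m) := by ring
    exact squeeze_zero hgnonneg hb (Real.tendsto_exp_atBot.comp
      (Filter.Tendsto.const_mul_atBot ha Filter.tendsto_id))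
  have htop : Filter.Tendsto g Filter.atTop (nhds 0) := by
    have hb : ∀ m, g m ≤ Real.exp (a ^ 2 * t - a * m) := by
      intro m
      calc g m ≤ Real.exp (a * m) * Real.exp (a ^ 2 * t - 2 * a * m) * 1 := by
            apply mul_le_mul (mul_le_mul le_rfl (hF₁bound m) (hF₁01 m).1 (Real.exp_nonneg _))
              (hF₂01 m).2 (hF₂01 m).1
            exact mul_nonneg (Real.exp_nonneg _) (Real.exp_nonneg _)
        _ = Real.exp (a ^ 2 * t - a * m) := by
            rw [mul_one, ← Real.exp_add]
            congr 1
            ring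
    have h2 : Filter.Tendsto (fun m : ℝ => Real.exp (-(a * m))) Filter.atTop (nhds 0) := by
      apply Real.tendsto_exp_atBot.comp
      have := Filter.Tendsto.const_mul_atTop_of_neg (show -a < 0 by linarith)
        (Filter.tendsto_id : Filter.Tendsto (fun m : ℝ => m) Filter.atTop Filter.atTop)
      simpa [neg_mul] using this
    have htend : Filter.Tendsto (fun m => Real.exp (a ^ 2 * t - a * m)) Filter.atTop (nhds 0) := by
      have h3 := h2.const_mul (Real.exp (a ^ 2 * t))
      rw [mul_zero] at h3
      apply h3.congr
      intro m
      rw [← Real.exp_add, sub_eq_add_neg]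
    exact squeeze_zero hgnonneg hb htend
  have hintD0 : ∫ m, D m = 0 := by
    rw [integral_of_hasDerivAt_of_tendsto hderiv hIntD hbot htop]
    ring
  -- evaluate the two remaining Gaussian-weighted integrals
  have harg1 : (-(a * t' / 2) - a * t / 2) / Real.sqrt (t + t')
      = -(a / 2 * Real.sqrt (t + t')) := by
    have hTT : Real.sqrt (t + t') * Real.sqrt (t + t') = t + t' := Real.mul_self_sqrt hT.le
    rw [div_eq_iff (Real.sqrt_pos.2 hT).ne']
    nlinarith [hTT]
  have hJ1 : ∫ m, heatK t (m - a * t / 2) * F₂ m = 1 - Phi (a / 2 * Real.sqrt (t + t')) := by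
    have hrw : ∀ m, F₂ m = ∫ s in Iic (-(a * t' / 2)), heatK t' (s - m) := by
      intro m
      rw [setIntegral_Iic_heatK_sub ht']
      simp only [hF₂def]
      congr 1
      ring
    calc ∫ m, heatK t (m - a * t / 2) * F₂ m
        = ∫ m, heatK t (m - a * t / 2) * ∫ s in Iic (-(a * t' / 2)), heatK t' (s - m) := by
          congr 1; ext m; rw [hrw m]
      _ = Phi ((-(a * t' / 2) - a * t / 2) / Real.sqrt (t + t')) := heatK_fubini ht ht' _ _
      _ = 1 - Phi (a / 2 * Real.sqrt (t + t')) := by rw [harg1, Phi_neg]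
  have harg2 : (-(a * t / 2) - a * t' / 2) / Real.sqrt (t' + t)
      = -(a / 2 * Real.sqrt (t + t')) := by
    rw [add_comm t' t, ← harg1]
    congr 1
    ring
  have hJ2 : ∫ m, F₁ m * heatK t' (m - a * t' / 2) = 1 - Phi (a / 2 * Real.sqrt (t + t')) := by
    have hrw : ∀ m, F₁ m = ∫ s in Iic (-(a * t / 2)), heatK t (s - m) := by
      intro m
      rw [setIntegral_Iic_heatK_sub ht]
      simp only [hF₁def]
      congr 1
      ring
    calc ∫ m, F₁ m * heatK t' (m - a * t' / 2)
        = ∫ m, heatK t' (m - a * t' / 2) * ∫ s in Iic (-(a * t / 2)), heatK t (s - m) := by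
          congr 1; ext m; rw [hrw m, mul_comm]
      _ = Phi ((-(a * t / 2) - a * t' / 2) / Real.sqrt (t' + t)) := heatK_fubini ht' ht _ _
      _ = 1 - Phi (a / 2 * Real.sqrt (t + t')) := by rw [harg2, Phi_neg]
  -- assemble
  have hsplit : (fun m => a * Real.exp (a * m) * (F₁ m * F₂ m)) = fun m => D m + h m := by
    ext m
    rw [hDdef]
    ring
  rw [hsplit, integral_add hIntD hInth, hintD0, zero_add, hhdef]
  rw [integral_add hInt1 hInt2, hJ1, hJ2]
  ring

lemma image_exp_univ {a : ℝ} (ha : 0 < a) :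
    (fun u => Real.exp (a * u)) '' univ = Ioi (0:ℝ) := by
  ext z
  simp only [image_univ, mem_range, mem_Ioi]
  constructor
  · rintro ⟨u, rfl⟩; exact Real.exp_pos _
  · intro hz; exact ⟨Real.log z / a, by rw [mul_div_cancel₀ _ ha.ne', Real.exp_log hz]⟩

theorem Psi_covariance (a : ℝ) (ha : 0 < a) (x : ℝ) (hx : 0 < x)
    (t t' : ℝ) (ht : 0 < t) (ht' : 0 < t') :
    (∫ y in Set.Ioi (0:ℝ), Psi a x t y * Psi a x t' y)
      = 2 * x * (1 - Phi (a / 2 * Real.sqrt (t + t'))) := by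
  have hxL : Real.exp (a * (Real.log x / a)) = x := by
    rw [mul_div_cancel₀ _ ha.ne', Real.exp_log hx]
  calc (∫ y in Set.Ioi (0:ℝ), Psi a x t y * Psi a x t' y)
      = ∫ y in Set.Ioi (0:ℝ),
          Phi ((Real.log x / a - Real.log y / a - a * t / 2) / Real.sqrt t)
          * Phi ((Real.log x / a - Real.log y / a - a * t' / 2) / Real.sqrt t') := by
        apply setIntegral_congr_fun measurableSet_Ioi
        intro y _
        beta_reduce
        rw [Psi_eq_Phi ha hx ht y, Psi_eq_Phi ha hx ht' y]
    _ = ∫ u, a * Real.exp (a * u)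
          * (Phi ((Real.log x / a - u - a * t / 2) / Real.sqrt t)
             * Phi ((Real.log x / a - u - a * t' / 2) / Real.sqrt t')) := by
        rw [← image_exp_univ ha, integral_image_eq_integral_abs_deriv_smul MeasurableSet.univ
          (fun u _ => hasDerivWithinAt_exp_mul u _) (injOn_exp_mul ha _)]
        rw [setIntegral_univ]
        apply integral_congr_ae (Filter.Eventually.of_forall _)
        intro u
        beta_reduce
        rw [Real.log_exp, mul_div_cancel_left₀ _ ha.ne', smul_eq_mul,
          abs_of_pos (by positivity : (0:ℝ) < a * Real.exp (a * u))]
    _ = ∫ u, a * Real.exp (a * (u + Real.log x / a))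
          * (Phi ((Real.log x / a - (u + Real.log x / a) - a * t / 2) / Real.sqrt t)
             * Phi ((Real.log x / a - (u + Real.log x / a) - a * t' / 2) / Real.sqrt t')) := by
        exact (integral_add_right_eq_self (fun u => a * Real.exp (a * u)
          * (Phi ((Real.log x / a - u - a * t / 2) / Real.sqrt t)
             * Phi ((Real.log x / a - u - a * t' / 2) / Real.sqrt t')))
          (Real.log x / a)).symm
    _ = ∫ u, x * (a * Real.exp (a * u)
          * (Phi ((-u - a * t / 2) / Real.sqrt t)
             * Phi ((-u - a * t' / 2) / Real.sqrt t'))) := by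
        apply integral_congr_ae (Filter.Eventually.of_forall _)
        intro u
        beta_reduce
        rw [show a * (u + Real.log x / a) = a * u + a * (Real.log x / a) by ring,
          Real.exp_add, hxL,
          show Real.log x / a - (u + Real.log x / a) - a * t / 2 = -u - a * t / 2 by ring,
          show Real.log x / a - (u + Real.log x / a) - a * t' / 2 = -u - a * t' / 2 by ring]
        ring
    _ = x * ∫ u, a * Real.exp (a * u)
          * (Phi ((-u - a * t / 2) / Real.sqrt t)
             * Phi ((-u - a * t' / 2) / Real.sqrt t')) := integral_const_mul x _
    _ = 2 * x * (1 - Phi (a / 2 * Real.sqrt (t + t'))) := by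
        rw [I0_lemma ha ht ht']
        ring
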